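/- Let n ≥ 2, let A be an invertible n×n real matrix, b, c ∈ ℝⁿ with c₁ ≠ 0, let M̃ be the lower-right (n−1)×(n−1) block of M = (I − (1/c₁) c e₁ᵀ) A, and assume det(M̃) ≠ 0. Let μ ∈ ℝ and suppose x ∈ ℝⁿ satisfies x₁ = 0 and Ax + bμ − (e₁ᵀ(Ax + bμ)/c₁) c = 0. Then the product of the first components of the two vector fields at x satisfies χ = (e₁ᵀ(Ax + bμ)) · c₁ = (ρᵀ b) c₁ μ / det(M̃), where ρᵀ = e₁ᵀ adj(A). -/

import Mathlib

open Matrix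

/-- The matrix `M = (I − (1/c₁) c e₁ᵀ) A`. -/
noncomputable def Mmat {n : ℕ} (A : Matrix (Fin (n + 2)) (Fin (n + 2)) ℝ)
    (c : Fin (n + 2) → ℝ) : Matrix (Fin (n + 2)) (Fin (n + 2)) ℝ :=
  ((1 : Matrix (Fin (n + 2)) (Fin (n + 2)) ℝ)
      - (c 0)⁻¹ • Matrix.vecMulVec c (Pi.single 0 1)) * A

/-- `M̃`, the lower-right `(n−1)×(n−1)` block of `M`. -/
noncomputable def Mtilde {n : ℕ} (A : Matrix (Fin (n + 2)) (Fin (n + 2)) ℝ)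
    (c : Fin (n + 2) → ℝ) : Matrix (Fin (n + 1)) (Fin (n + 1)) ℝ :=
  (Mmat A c).submatrix Fin.succ Fin.succ

/-- The (0,0) entry of the adjugate is the determinant of the minor. -/
lemma adj00 {n : ℕ} (M : Matrix (Fin (n + 2)) (Fin (n + 2)) ℝ) :
    M.adjugate 0 0 = (M.submatrix Fin.succ Fin.succ).det := by
  rw [Matrix.adjugate_apply, Matrix.det_succ_row_zero]
  rw [Fin.sum_univ_succ]
  have h1 : ∀ j : Fin (n+1), (M.updateRow 0 (Pi.single 0 1)) 0 j.succ = 0 := by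
    intro j; rw [Matrix.updateRow_self]; simp [Pi.single_apply, Fin.succ_ne_zero]
  simp only [h1, mul_zero, zero_mul, Finset.sum_const_zero, add_zero]
  have h2 : (M.updateRow 0 (Pi.single 0 1)) 0 0 = 1 := by
    rw [Matrix.updateRow_self]; simp
  have h3 : (M.updateRow 0 (Pi.single 0 1)).submatrix Fin.succ (Fin.succAbove 0)
      = M.submatrix Fin.succ Fin.succ := by
    ext i j
    simp [Matrix.updateRow_ne (Fin.succ_ne_zero i)]
  rw [h2, h3]; simp

/-- Column 0 of the adjugate of `P = 1 - c₀⁻¹ c e₀ᵀ`. -/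
lemma adjP {n : ℕ} (c : Fin (n + 2) → ℝ) (hc : c 0 ≠ 0) (k : Fin (n + 2)) :
    ((1 : Matrix (Fin (n + 2)) (Fin (n + 2)) ℝ)
      - (c 0)⁻¹ • Matrix.vecMulVec c (Pi.single 0 1)).adjugate k 0 = (c 0)⁻¹ * c k := by
  set P : Matrix (Fin (n + 2)) (Fin (n + 2)) ℝ :=
    (1 : Matrix (Fin (n + 2)) (Fin (n + 2)) ℝ) - (c 0)⁻¹ • Matrix.vecMulVec c (Pi.single 0 1)
  rw [Matrix.adjugate_apply]
  set U : Matrix (Fin (n + 2)) (Fin 2) ℝ :=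
    Matrix.of fun i a => if a = 0 then -((c 0)⁻¹ * c i) else (if i = 0 then 1 else 0)
  set V : Matrix (Fin 2) (Fin (n + 2)) ℝ :=
    Matrix.of fun a j => if a = 0 then (Pi.single 0 1 : Fin (n+2) → ℝ) j
      else (Pi.single k 1 : Fin (n+2) → ℝ) j
  have hQ : P.updateRow 0 (Pi.single k 1) = 1 + U * V := by
    ext i j
    rw [Matrix.add_apply, Matrix.mul_apply, Fin.sum_univ_two]
    by_cases hi : i = 0
    · subst hi
      rw [Matrix.updateRow_self]
      simp [U, V, Matrix.one_apply, Pi.single_apply, eq_comm, inv_mul_cancel₀ hc]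
      by_cases hj : j = 0 <;> by_cases hjk : j = k <;> simp [hj, hjk, inv_mul_cancel₀ hc] <;>
        simp [hjk.symm ▸ hj, eq_comm]
    · rw [Matrix.updateRow_ne hi]
      simp [P, U, V, Matrix.one_apply, Matrix.vecMulVec_apply, Pi.single_apply, hi, eq_comm]
      split_ifs <;> ring
  rw [hQ, Matrix.det_one_add_mul_comm]
  have hVU : (1 + V * U) = !![0, 1; -((c 0)⁻¹ * c k), 1 + (if k = 0 then 1 else 0)] := by
    ext a b
    rw [Matrix.add_apply, Matrix.mul_apply]
    fin_cases a <;> fin_cases b <;>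
      simp [U, V, Matrix.one_apply, Pi.single_apply, ite_mul, Finset.sum_ite_eq,
        inv_mul_cancel₀ hc, eq_comm]
  rw [hVU, Matrix.det_fin_two]
  simp

/-- `det M̃ = c₀⁻¹ (ρᵀ c)` where `ρᵀ = e₁ᵀ adj(A)`. -/
lemma detMtilde {n : ℕ} (A : Matrix (Fin (n + 2)) (Fin (n + 2)) ℝ)
    (c : Fin (n + 2) → ℝ) (hc : c 0 ≠ 0) :
    (Mtilde A c).det = (c 0)⁻¹ * (A.adjugate.mulVec c) 0 := by
  rw [Mtilde, ← adj00, Mmat, Matrix.adjugate_mul_distrib, Matrix.mul_apply]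
  rw [Matrix.mulVec, dotProduct, Finset.mul_sum]
  refine Finset.sum_congr rfl fun k _ => ?_
  rw [adjP c hc k]; ring

/-- At a pseudo-equilibrium `x`, the product of the first components of the two
vector fields satisfies `χ = (e₁ᵀ(Ax + bμ)) c₁ = (ρᵀ b) c₁ μ / det(M̃)`. -/
theorem chi_at_pseudoEquilibrium (n : ℕ)
    (A : Matrix (Fin (n + 2)) (Fin (n + 2)) ℝ) (b c : Fin (n + 2) → ℝ)
    (hA : IsUnit A.det) (hc : c 0 ≠ 0) (hM : (Mtilde A c).det ≠ 0)
    (μ : ℝ) (x : Fin (n + 2) → ℝ) (hx1 : x 0 = 0)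
    (hx : A.mulVec x + μ • b - (((A.mulVec x + μ • b) 0) / c 0) • c = 0) :
    (A.mulVec x + μ • b) 0 * c 0
      = (A.adjugate.mulVec b) 0 * c 0 * μ / (Mtilde A c).det := by
  set y := A.mulVec x + μ • b with hy
  set s := y 0 / c 0 with hs
  have hy' : y = s • c := sub_eq_zero.mp hx
  have hAx : A.mulVec x = s • c - μ • b := by
    rw [← hy']; simp [hy]
  have key : A.det • x = s • A.adjugate.mulVec c - μ • A.adjugate.mulVec b := by
    calc A.det • x = (A.det • (1 : Matrix (Fin (n+2)) (Fin (n+2)) ℝ)).mulVec x := by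
          rw [Matrix.smul_mulVec, Matrix.one_mulVec]
      _ = A.adjugate.mulVec (A.mulVec x) := by rw [← Matrix.adjugate_mul, ← Matrix.mulVec_mulVec]
      _ = s • A.adjugate.mulVec c - μ • A.adjugate.mulVec b := by
          rw [hAx, Matrix.mulVec_sub, Matrix.mulVec_smul, Matrix.mulVec_smul]
  have key0 : s * (A.adjugate.mulVec c) 0 = μ * (A.adjugate.mulVec b) 0 := by
    have := congrFun key 0
    simp [hx1] at this
    linarith [this]
  have hy0 : y 0 = s * c 0 := by
    rw [hs, div_mul_cancel₀ _ hc]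
  have hρc : (A.adjugate.mulVec c) 0 ≠ 0 := by
    intro h
    rw [detMtilde A c hc, h, mul_zero] at hM
    exact hM rfl
  rw [detMtilde A c hc, hy0]
  rw [eq_div_iff (mul_ne_zero (inv_ne_zero hc) hρc)]
  linear_combination c 0 * key0 + (s * c 0 * (A.adjugate.mulVec c) 0) * mul_inv_cancel₀ hc
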